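/- Let N = [[1, 1],[0, 1]] ∈ M₂(ℂ), and for a signature f of arity n define N^{⊗n}f to be the signature x ↦ Σ_y (∏_{i=1}^n N_{x_i, y_i}) f(y). Then: (i) N^{⊗1}Δ₀ = Δ₀; and (ii) for every integer k ≥ −1, N^{⊗(k+2)} h_k = g_{k+2}, where h_k is the symmetric arity-(k+2) signature with value −k at Hamming weight 0, value 1 at Hamming weight 1, and value 0 at Hamming weight ≥ 2, and g_{k+2} is the symmetric arity-(k+2) signature with value 2 at Hamming weight 0, value 1 at Hamming weight 1, and value 0 at Hamming weight ≥ 2. Consequently the image under this transformation of the set {Δ₀} ∪ {h_k : k ≥ −1} is {Δ₀} ∪ {g_k : k ≥ 1}. -/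
import Mathlib


/-- Number of `1`s (Hamming weight) of a Boolean string. -/
def wt1 {n : ℕ} (x : Fin n → Bool) : ℕ := (Finset.univ.filter fun i => x i = true).card

/-- The matrix `N = [[1,1],[0,1]]` with entries indexed by `{0,1}` (so
`N_{0,0} = N_{0,1} = N_{1,1} = 1` and `N_{1,0} = 0`), as a function on
Booleans. -/
noncomputable def Nmat : Bool → Bool → ℂ := fun a b => if a = true ∧ b = false then 0 else 1

/-- The transformation `f ↦ N^{⊗n} f`,
`(N^{⊗n}f)(x) = Σ_y (∏ᵢ N_{xᵢ,yᵢ}) f(y)`. -/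
noncomputable def Ntrans {n : ℕ} (f : (Fin n → Bool) → ℂ) : (Fin n → Bool) → ℂ :=
  fun x => ∑ y : Fin n → Bool, (∏ i, Nmat (x i) (y i)) * f y

/-- The unary signature `Δ₀ = [1,0]`. -/
noncomputable def Delta0 : (Fin 1 → Bool) → ℂ := fun x => if x 0 = false then 1 else 0

/-- For `k ≥ −1`, the symmetric arity-`(k+2)` signature `h_k`:
value `−k` at Hamming weight `0`, value `1` at weight `1`, `0` at weight `≥ 2`. -/
noncomputable def hsig (k : ℤ) : (Fin (k + 2).toNat → Bool) → ℂ :=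
  fun x => if wt1 x = 0 then (-k : ℂ) else if wt1 x = 1 then 1 else 0

/-- The symmetric arity-`m` signature `g_m`: value `2` at Hamming weight `0`,
value `1` at weight `1`, `0` at weight `≥ 2`. -/
noncomputable def gsig {m : ℕ} : (Fin m → Bool) → ℂ :=
  fun x => if wt1 x = 0 then 2 else if wt1 x = 1 then 1 else 0

lemma prodN {n : ℕ} (x y : Fin n → Bool) :
    (∏ i, Nmat (x i) (y i)) = if ∀ i, x i = true → y i = true then 1 else 0 := by
  split_ifs with h
  · apply Finset.prod_eq_one
    intro i _
    unfold Nmat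
    by_cases hx : x i = true
    · simp [hx, h i hx]
    · simp at hx; simp [hx]
  · push_neg at h
    obtain ⟨i, hx, hy⟩ := h
    apply Finset.prod_eq_zero (Finset.mem_univ i)
    unfold Nmat
    simp at hy
    simp [hx, hy]

lemma ntrans_eq {n : ℕ} (f : (Fin n → Bool) → ℂ) (x : Fin n → Bool) :
    Ntrans f x = ∑ y ∈ Finset.univ.filter (fun y => ∀ i, x i = true → y i = true), f y := by
  rw [Finset.sum_filter]
  unfold Ntrans
  congr 1; funext y
  rw [prodN]
  split_ifs <;> simp

lemma wt1_zero {n : ℕ} (x : Fin n → Bool) : wt1 x = 0 ↔ x = fun _ => false := by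
  unfold wt1
  rw [Finset.card_eq_zero, Finset.filter_eq_empty_iff]
  constructor
  · intro h; funext i; simpa using h (Finset.mem_univ i)
  · intro h i _; simp [h]

lemma wt1_le {n : ℕ} {x y : Fin n → Bool} (h : ∀ i, x i = true → y i = true) :
    wt1 x ≤ wt1 y := by
  apply Finset.card_le_card
  intro i hi
  simp only [Finset.mem_filter, Finset.mem_univ, true_and] at *
  exact h i hi

lemma wt1_one_filter {n : ℕ} :
    Finset.univ.filter (fun y : Fin n → Bool => wt1 y = 1) =
      Finset.univ.image (fun i : Fin n => fun j => decide (j = i)) := by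
  ext y
  simp only [Finset.mem_filter, Finset.mem_univ, true_and, Finset.mem_image]
  constructor
  · intro h
    obtain ⟨i, hi⟩ := Finset.card_eq_one.mp h
    refine ⟨i, ?_⟩
    funext j
    by_cases hj : j = i
    · subst hj
      have : j ∈ Finset.univ.filter (fun i => y i = true) := hi ▸ Finset.mem_singleton_self j
      simp only [Finset.mem_filter] at this
      simp [this.2]
    · have : j ∉ Finset.univ.filter (fun i => y i = true) := by
        rw [hi]; simpa using hj
      simp only [Finset.mem_filter, Finset.mem_univ, true_and] at this
      simp [Bool.eq_false_iff.mpr this, hj]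
  · rintro ⟨i, rfl⟩
    unfold wt1
    rw [Finset.card_eq_one]
    exact ⟨i, by ext j; simp⟩

lemma card_wt1_one {n : ℕ} :
    (Finset.univ.filter (fun y : Fin n → Bool => wt1 y = 1)).card = n := by
  rw [wt1_one_filter, Finset.card_image_of_injective _ ?_, Finset.card_univ, Fintype.card_fin]
  intro a b hab
  have := congrFun hab a
  simpa using this.symm

lemma card_wt1_zero {n : ℕ} :
    (Finset.univ.filter (fun y : Fin n → Bool => wt1 y = 0)).card = 1 := by
  rw [Finset.card_eq_one]
  refine ⟨fun _ => false, ?_⟩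
  ext y
  simp [wt1_zero]

lemma part1 : Ntrans Delta0 = Delta0 := by
  funext x
  unfold Ntrans
  rw [← (Equiv.funUnique (Fin 1) Bool).symm.sum_comp]
  rw [Fintype.sum_bool]
  simp only [Equiv.funUnique_symm_apply, Fin.prod_univ_one]
  cases hx : x 0 <;> simp [Nmat, Delta0, hx, Function.const]

lemma hsig_split (k : ℤ) (y : Fin (k+2).toNat → Bool) :
    hsig k y = (if wt1 y = 0 then (-k : ℂ) else 0) + (if wt1 y = 1 then 1 else 0) := by
  unfold hsig
  by_cases h0 : wt1 y = 0
  · simp [h0]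
  · by_cases h1 : wt1 y = 1 <;> simp [h0, h1]

lemma part2 (k : ℤ) (hk : -1 ≤ k) :
    Ntrans (hsig k) = (gsig : (Fin (k + 2).toNat → Bool) → ℂ) := by
  funext x
  rw [ntrans_eq]
  by_cases h0 : wt1 x = 0
  · have hx : x = fun _ => false := (wt1_zero x).mp h0
    rw [Finset.filter_true_of_mem (by intro y _ i hxi; rw [hx] at hxi; simp at hxi)]
    calc ∑ y, hsig k y
        = ∑ y : Fin (k+2).toNat → Bool,
            ((if wt1 y = 0 then (-k : ℂ) else 0) + (if wt1 y = 1 then 1 else 0)) := by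
          simp only [hsig_split]
      _ = gsig x := by
          rw [Finset.sum_add_distrib, ← Finset.sum_filter, ← Finset.sum_filter,
            Finset.sum_const, Finset.sum_const, card_wt1_zero, card_wt1_one]
          have h2 : ((k+2).toNat : ℤ) = k + 2 := Int.toNat_of_nonneg (by omega)
          have hc : (((k+2).toNat : ℕ) : ℂ) = (k : ℂ) + 2 := by
            have := congrArg (Int.cast : ℤ → ℂ) h2
            push_cast at this
            exact this
          unfold gsig
          rw [if_pos h0]
          simp only [one_smul, nsmul_eq_mul, mul_one, hc]
          ring
  · by_cases h1 : wt1 x = 1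
    · rw [Finset.sum_eq_single_of_mem x (by simp)]
      · simp [hsig, gsig, h0, h1]
      · intro y hy hne
        simp only [Finset.mem_filter, Finset.mem_univ, true_and] at hy
        have hle := wt1_le hy
        unfold hsig
        rw [if_neg (by omega), if_neg]
        intro hy1
        apply hne
        have hsub : (Finset.univ.filter fun i => x i = true) ⊆
            (Finset.univ.filter fun i => y i = true) := by
          intro i hi
          simp only [Finset.mem_filter, Finset.mem_univ, true_and] at *
          exact hy i hi
        have hsets := Finset.eq_of_subset_of_card_le hsub (by
          show wt1 y ≤ wt1 x; omega)
        funext j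
        have := Finset.ext_iff.mp hsets j
        simp only [Finset.mem_filter, Finset.mem_univ, true_and] at this
        cases hyj : y j
        · cases hxj : x j
          · rfl
          · exact absurd (this.mp hxj) (by simp [hyj])
        · exact (this.mpr hyj).symm
    · rw [Finset.sum_eq_zero, eq_comm]
      · simp [gsig, h0, h1]
      · intro y hy
        simp only [Finset.mem_filter, Finset.mem_univ, true_and] at hy
        have hle := wt1_le hy
        simp only [hsig]
        rw [if_neg (by omega), if_neg (by omega)]


/-- (i) `N^{⊗1}Δ₀ = Δ₀`; (ii) for every integer `k ≥ −1`,
`N^{⊗(k+2)} h_k = g_{k+2}`; consequently the image under this transformation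
of the set `{Δ₀} ∪ {h_k : k ≥ −1}` is `{Δ₀} ∪ {g_k : k ≥ 1}`. -/
theorem stmt12 :
    Ntrans Delta0 = Delta0 ∧
    (∀ k : ℤ, -1 ≤ k → Ntrans (hsig k) = (gsig : (Fin (k + 2).toNat → Bool) → ℂ)) ∧
    ((fun s : Σ n : ℕ, (Fin n → Bool) → ℂ =>
        (⟨s.1, Ntrans s.2⟩ : Σ n : ℕ, (Fin n → Bool) → ℂ)) ''
      ({⟨1, Delta0⟩} ∪ {s | ∃ k : ℤ, -1 ≤ k ∧ s = ⟨(k + 2).toNat, hsig k⟩}) =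
      ({⟨1, Delta0⟩} ∪ {s | ∃ m : ℕ, 1 ≤ m ∧ s = ⟨m, gsig⟩})) := by
  refine ⟨part1, part2, ?_⟩
  ext s
  simp only [Set.mem_image, Set.mem_union, Set.mem_singleton_iff, Set.mem_setOf_eq]
  constructor
  · rintro ⟨t, (rfl | ⟨k, hk, rfl⟩), rfl⟩
    · left; simp [part1]
    · right
      refine ⟨(k+2).toNat, by omega, ?_⟩
      rw [part2 k hk]
  · rintro (rfl | ⟨m, hm, rfl⟩)
    · exact ⟨⟨1, Delta0⟩, Or.inl rfl, by simp [part1]⟩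
    · refine ⟨⟨((m:ℤ)-2+2).toNat, hsig ((m:ℤ)-2)⟩, Or.inr ⟨(m:ℤ)-2, by omega, rfl⟩, ?_⟩
      show (⟨((m:ℤ)-2+2).toNat, Ntrans (hsig ((m:ℤ)-2))⟩ : Σ n : ℕ, (Fin n → Bool) → ℂ) = ⟨m, gsig⟩
      rw [part2 _ (by omega)]
      have h : ((m:ℤ)-2+2).toNat = m := by omega
      rw [h]
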